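/- For every α ≥ 0 and every x ≠ 0, the B2Bsqrt function is differentiable at x with derivative f_{B2Bsqrt}′(x) = 1/(2·√(α + |x|)). -/

import Mathlib

/-- The back-to-back square root (B2Bsqrt) activation function with parameter `α ≥ 0`:
`f(x) = sign(x) * (√(α + |x|) - √α)`, where `sign 0 = 0`. -/
noncomputable def b2bsqrt (α : ℝ) (x : ℝ) : ℝ :=
  Real.sign x * (Real.sqrt (α + |x|) - Real.sqrt α)

/-- For every `α ≥ 0` and every `x ≠ 0`, the B2Bsqrt function is differentiable at `x`
with derivative `1 / (2√(α + |x|))`. -/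
theorem b2bsqrt_hasDerivAt_of_ne_zero (α : ℝ) (hα : 0 ≤ α) (x : ℝ) (hx : x ≠ 0) :
    HasDerivAt (b2bsqrt α) (1 / (2 * Real.sqrt (α + |x|))) x := by
  rcases lt_or_gt_of_ne hx with hneg | hpos
  · -- x < 0 : near x, b2bsqrt α y = -(√(α - y) - √α)
    have hne : α - x ≠ 0 := by nlinarith
    have h1 : HasDerivAt (fun y : ℝ => α - y) (-1) x := by
      simpa using (hasDerivAt_id x).const_sub α
    have h2 := (Real.hasDerivAt_sqrt hne).comp x h1
    have h3 : HasDerivAt (fun y : ℝ => -(Real.sqrt (α - y) - Real.sqrt α))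
        (1 / (2 * Real.sqrt (α - x))) x := by
      have := (h2.sub_const (Real.sqrt α)).neg
      convert this using 1
      · rfl
      · rfl
      · rfl
      · ring
    have heq : b2bsqrt α =ᶠ[nhds x] fun y => -(Real.sqrt (α - y) - Real.sqrt α) := by
      filter_upwards [Iio_mem_nhds hneg] with y hy
      simp only [Set.mem_Iio] at hy
      simp [b2bsqrt, Real.sign_of_neg hy, abs_of_neg hy]
      ring_nf
    have : HasDerivAt (b2bsqrt α) (1 / (2 * Real.sqrt (α - x))) x :=
      h3.congr_of_eventuallyEq heq
    simpa [abs_of_neg hneg, ← sub_eq_add_neg] using this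
  · -- x > 0
    have hne : α + x ≠ 0 := by nlinarith
    have h1 : HasDerivAt (fun y : ℝ => α + y) 1 x := by
      simpa using (hasDerivAt_id x).const_add α
    have h2 := (Real.hasDerivAt_sqrt hne).comp x h1
    have h3 : HasDerivAt (fun y : ℝ => Real.sqrt (α + y) - Real.sqrt α)
        (1 / (2 * Real.sqrt (α + x))) x := by
      have := h2.sub_const (Real.sqrt α)
      convert this using 1
      · rfl
      · rfl
      · rfl
      · ring
    have heq : b2bsqrt α =ᶠ[nhds x] fun y => Real.sqrt (α + y) - Real.sqrt α := by
      filter_upwards [Ioi_mem_nhds hpos] with y hy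
      simp only [Set.mem_Ioi] at hy
      simp [b2bsqrt, Real.sign_of_pos hy, abs_of_pos hy]
    have : HasDerivAt (b2bsqrt α) (1 / (2 * Real.sqrt (α + x))) x :=
      h3.congr_of_eventuallyEq heq
    simpa [abs_of_pos hpos] using this
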